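/- Let I ⊆ R = K[x_1,…,x_n] be the monomial ideal generated by x^{v_1},…,x^{v_q}, let A be the n×q matrix with columns v_1,…,v_q, and let B(Q) be the blocking polyhedron of Q(A). Then for every positive integer k, the integral closure of I^k equals the ideal generated by the monomials x^a with a an integer vector lying in kB(Q). -/

import Mathlib

open BigOperators Pointwise

/-- The monomial `x^a = x_1^{a_1} ⋯ x_n^{a_n}` in `K[x_1,…,x_n]`. -/
noncomputable def mono (K : Type*) [Field K] {n : ℕ} (a : Fin n → ℕ) :
    MvPolynomial (Fin n) K :=
  MvPolynomial.monomial (Finsupp.equivFunOnFinite.symm a) (1 : K)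

/-- The polyhedron `Q(A) = {x ∈ ℝⁿ : x ≥ 0, xA ≥ 1}`, where `A` is the
`n × q` matrix with columns `v 0, …, v (q-1)`. -/
def QA {n q : ℕ} (v : Fin q → Fin n → ℕ) : Set (Fin n → ℝ) :=
  {x | (∀ i, 0 ≤ x i) ∧ ∀ j, 1 ≤ ∑ i, x i * (v j i : ℝ)}

/-- The blocking polyhedron `B(Q) = {z ∈ ℝⁿ : z ≥ 0, ⟨z,x⟩ ≥ 1 ∀ x ∈ Q(A)}`. -/
def BQ {n q : ℕ} (v : Fin q → Fin n → ℕ) : Set (Fin n → ℝ) :=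
  {z | (∀ i, 0 ≤ z i) ∧ ∀ x ∈ QA v, 1 ≤ ∑ i, z i * x i}

/-- A set `S ⊆ ℝⁿ` has the integer decomposition property if for each `k ∈ ℕ`,
every integer vector in `k • S` is a sum of `k` integer vectors in `S`. -/
def HasIDP {n : ℕ} (S : Set (Fin n → ℝ)) : Prop :=
  ∀ (k : ℕ) (a : Fin n → ℤ), (fun i => (a i : ℝ)) ∈ (k : ℝ) • S →
    ∃ f : Fin k → Fin n → ℤ,
      (∀ j, (fun i => (f j i : ℝ)) ∈ S) ∧ a = ∑ j, f j

section Ideals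
variable (K : Type*) [Field K] {n q : ℕ}

lemma vf_apply (a : Fin n → ℕ) (i : Fin n) : (Finsupp.equivFunOnFinite.symm a) i = a i := rfl

lemma vf_add (a b : Fin n → ℕ) :
    Finsupp.equivFunOnFinite.symm (a + b)
      = Finsupp.equivFunOnFinite.symm a + Finsupp.equivFunOnFinite.symm b := by
  ext i; simp [vf_apply]

lemma mono_mul (a b : Fin n → ℕ) : mono K a * mono K b = mono K (a + b) := by
  simp [mono, MvPolynomial.monomial_mul, vf_add]

lemma vf_smul (a : Fin n → ℕ) (p : ℕ) :
    Finsupp.equivFunOnFinite.symm (fun i => p * a i) = p • Finsupp.equivFunOnFinite.symm a := by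
  ext i; simp [vf_apply]

lemma vf_sum {ι : Type*} (s : Finset ι) (w : ι → Fin n → ℕ) :
    Finsupp.equivFunOnFinite.symm (fun i => ∑ j ∈ s, w j i)
      = ∑ j ∈ s, Finsupp.equivFunOnFinite.symm (w j) := by
  ext i; simp [vf_apply, Finsupp.finset_sum_apply]

lemma mono_pow (a : Fin n → ℕ) (p : ℕ) : mono K a ^ p = mono K (fun i => p * a i) := by
  simp [mono, MvPolynomial.monomial_pow, one_pow, vf_smul]

lemma prod_monomial {ι : Type*} (s : Finset ι) (u : ι → (Fin n →₀ ℕ)) :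
    ∏ i ∈ s, MvPolynomial.monomial (u i) (1 : K) = MvPolynomial.monomial (∑ i ∈ s, u i) 1 := by
  induction s using Finset.cons_induction with
  | empty => simp
  | cons i s hi ih => simp [Finset.prod_cons, ih, MvPolynomial.monomial_mul]

lemma mono_mem_pow_iff (v : Fin q → Fin n → ℕ) (b : Fin n → ℕ) (m : ℕ) :
    mono K b ∈ (Ideal.span {f | ∃ j, f = mono K (v j)}) ^ m ↔
      ∃ c : Fin q → ℕ, (∑ j, c j) = m ∧ ∀ i, (∑ j, c j * v j i) ≤ b i := by
  classical
  set vf : Fin q → (Fin n →₀ ℕ) := fun j => Finsupp.equivFunOnFinite.symm (v j) with hvf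
  have hS : {f | ∃ j, f = mono K (v j)} =
      (fun d => MvPolynomial.monomial d (1 : K)) '' (Set.range vf) := by
    ext f
    simp only [Set.mem_setOf_eq, Set.mem_image, Set.mem_range]
    constructor
    · rintro ⟨j, rfl⟩; exact ⟨vf j, ⟨j, rfl⟩, rfl⟩
    · rintro ⟨d, ⟨j, rfl⟩, rfl⟩; exact ⟨j, rfl⟩
  constructor
  · intro hmem
    rw [hS, Ideal.span, Submodule.span_pow] at hmem
    have hsub : ((fun d => MvPolynomial.monomial d (1 : K)) '' (Set.range vf)) ^ m ⊆
        (fun d => MvPolynomial.monomial d (1 : K)) ''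
          {d | ∃ c : Fin q → ℕ, (∑ j, c j) = m ∧ d = ∑ j, c j • vf j} := by
      intro x hx
      rw [Set.mem_pow] at hx
      obtain ⟨f, hf⟩ := hx
      have hch : ∀ i : Fin m, ∃ j : Fin q, (f i : MvPolynomial (Fin n) K)
          = MvPolynomial.monomial (vf j) 1 := by
        intro i
        obtain ⟨d, hd1, hd2⟩ := (f i).2
        obtain ⟨j, rfl⟩ := hd1
        exact ⟨j, hd2.symm⟩
      choose g hg using hch
      have hx' : x = MvPolynomial.monomial (∑ i, vf (g i)) (1 : K) := by
        rw [← hf, List.prod_ofFn, ← prod_monomial]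
        exact Finset.prod_congr rfl fun i _ => hg i
      refine ⟨∑ i, vf (g i), ?_, hx'.symm⟩
      refine ⟨fun j => (Finset.univ.filter (fun i => g i = j)).card, ?_, ?_⟩
      · simpa using Finset.sum_fiberwise Finset.univ g (fun _ => (1:ℕ))
      · rw [← Finset.sum_fiberwise Finset.univ g (fun i => vf (g i))]
        refine Finset.sum_congr rfl fun j _ => ?_
        rw [Finset.sum_congr rfl (fun i hi => by
          rw [(Finset.mem_filter.mp hi).2]), Finset.sum_const]
    have := MvPolynomial.mem_ideal_span_monomial_image.mp
      (Ideal.span_mono hsub hmem)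
    have hsup : (mono K b).support = {Finsupp.equivFunOnFinite.symm b} := by
      rw [mono, MvPolynomial.support_monomial]
      simp
    obtain ⟨d, ⟨c, hc, rfl⟩, hle⟩ := this _ (by rw [hsup]; exact Finset.mem_singleton_self _)
    refine ⟨c, hc, fun i => ?_⟩
    have := hle i
    simpa [vf_apply, hvf, Finsupp.smul_apply] using this
  · rintro ⟨c, hc, hle⟩
    set d : Fin n → ℕ := fun i => ∑ j, c j * v j i with hd
    have hdmem : mono K d ∈ (Ideal.span {f | ∃ j, f = mono K (v j)}) ^ m := by
      have hprod : mono K d = ∏ j, (mono K (v j)) ^ (c j) := by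
        have : ∀ j : Fin q, (mono K (v j)) ^ (c j) = mono K (fun i => c j * v j i) :=
          fun j => mono_pow K (v j) (c j)
        rw [Finset.prod_congr rfl (fun j _ => this j)]
        simp only [mono]
        rw [prod_monomial, hd, vf_sum]
      rw [hprod, ← hc, ← Finset.prod_pow_eq_pow_sum]
      refine Ideal.prod_mem_prod fun j _ => Ideal.pow_mem_pow (Ideal.subset_span ?_) _
      exact ⟨j, rfl⟩
    have : mono K b = mono K d * mono K (fun i => b i - d i) := by
      rw [mono_mul]
      congr 1
      ext i
      exact (Nat.add_sub_cancel' (hle i)).symm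
    rw [this]
    exact Ideal.mul_mem_right _ _ hdmem

end Ideals
section Rat

variable {N : ℕ} {ι : Type*}

/-- cast of a rational vector to a real vector -/
def rc {N : ℕ} (b : Fin N → ℚ) : Fin N → ℝ := fun t => (b t : ℝ)

lemma rat_dual_vec (f : Module.Dual ℚ (Fin N → ℚ)) (x : Fin N → ℚ) :
    f x = ∑ t, x t * f (Pi.single t 1) := by
  conv_lhs => rw [pi_eq_sum_univ x, map_sum]
  refine Finset.sum_congr rfl fun t _ => ?_
  rw [map_smul, smul_eq_mul]
  congr 2
  funext j
  simp [Pi.single_apply, eq_comm]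

/-- a rational vector in the real span of rational vectors is in their rational span -/
lemma ratSpan (s : Finset ι) (w : ι → Fin N → ℚ) (b : Fin N → ℚ)
    (hb : rc b ∈ Submodule.span ℝ ((fun j => rc (w j)) '' ↑s)) :
    b ∈ Submodule.span ℚ (w '' ↑s) := by
  by_contra hn
  obtain ⟨f, hf0, hfmap⟩ := Submodule.exists_dual_map_eq_bot_of_notMem hn inferInstance
  set y : Fin N → ℚ := fun t => f (Pi.single t 1) with hy
  let F : (Fin N → ℝ) →ₗ[ℝ] ℝ :=
    { toFun := fun x => ∑ t, x t * (y t : ℝ)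
      map_add' := by intro x z; simp [add_mul, Finset.sum_add_distrib]
      map_smul' := by intro cR x; simp [Finset.mul_sum, mul_assoc]
      }
  have hFrc : ∀ x : Fin N → ℚ, F (rc x) = ((f x : ℚ) : ℝ) := by
    intro x
    rw [rat_dual_vec f x]
    push_cast
    rfl
  have hker : Submodule.span ℝ ((fun j => rc (w j)) '' ↑s) ≤ LinearMap.ker F := by
    rw [Submodule.span_le]
    rintro _ ⟨j, hj, rfl⟩
    have : f (w j) = 0 := by
      have : f (w j) ∈ Submodule.map f (Submodule.span ℚ (w '' ↑s)) :=
        Submodule.mem_map_of_mem (Submodule.subset_span ⟨j, hj, rfl⟩)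
      rw [hfmap] at this
      simpa using this
    simp [LinearMap.mem_ker, hFrc, this]
  have : F (rc b) = 0 := hker hb
  rw [hFrc] at this
  exact hf0 (by exact_mod_cast this)

/-- rational conic Carathéodory: a nonnegative real combination of rational vectors
equaling a rational vector can be replaced by a nonnegative rational combination. -/
lemma coneRat [Fintype ι] [DecidableEq ι] (w : ι → Fin N → ℚ) (b : Fin N → ℚ) :
    ∀ s : Finset ι, ∀ c : ι → ℝ, (∀ j ∈ s, 0 ≤ c j) →
      (rc b = ∑ j ∈ s, c j • rc (w j)) →
      ∃ d : ι → ℚ, (∀ j, 0 ≤ d j) ∧ b = ∑ j ∈ s, d j • w j := by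
  intro s
  induction s using Finset.strongInductionOn with
  | _ s IH =>
    intro c hc hsum
    by_cases hli : LinearIndependent ℝ (fun j : {x // x ∈ s} => rc (w j))
    · -- independent case
      have hbspan : rc b ∈ Submodule.span ℝ ((fun j => rc (w j)) '' ↑s) := by
        rw [hsum]
        exact Submodule.sum_mem _ fun j hj =>
          Submodule.smul_mem _ _ (Submodule.subset_span ⟨j, hj, rfl⟩)
      obtain ⟨l, hls, hlb⟩ :=
        (Finsupp.mem_span_image_iff_linearCombination ℚ).mp (ratSpan s w b hbspan)
      have hsupp : l.support ⊆ s := (Finsupp.mem_supported ℚ l).mp hls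
      have hbsum : b = ∑ j ∈ s, l j • w j := by
        rw [← hlb, Finsupp.linearCombination_apply, Finsupp.sum]
        exact Finset.sum_subset hsupp fun j _ hj => by
          rw [Finsupp.notMem_support_iff.mp hj, zero_smul]
      have hcast : rc b = ∑ j ∈ s, ((l j : ℝ)) • rc (w j) := by
        funext t
        have := congrFun (congrArg rc hbsum) t
        rw [this]
        simp only [rc, Finset.sum_apply, Pi.smul_apply, smul_eq_mul]
        push_cast
        rfl
      have hzero : ∑ j ∈ s, ((l j : ℝ) - c j) • rc (w j) = 0 := by
        simp only [sub_smul, Finset.sum_sub_distrib]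
        rw [← hcast, ← hsum, sub_self]
      have hattach : ∑ j : {x // x ∈ s}, ((l j.1 : ℝ) - c j.1) • rc (w j.1) = 0 := by
        rw [← hzero]
        exact (Finset.sum_attach s fun j => ((l j : ℝ) - c j) • rc (w j))
      have heq := Fintype.linearIndependent_iff.mp hli
        (fun j : {x // x ∈ s} => (l j.1 : ℝ) - c j.1) hattach
      have hlc : ∀ j ∈ s, (l j : ℝ) = c j := by
        intro j hj
        have h2 : (l j : ℝ) - c j = 0 := heq ⟨j, hj⟩
        linarith
      refine ⟨fun j => if j ∈ s then l j else 0, fun j => ?_, ?_⟩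
      · by_cases hj : j ∈ s
        · simp only [hj, if_true]
          have : (0:ℝ) ≤ (l j : ℝ) := by rw [hlc j hj]; exact hc j hj
          exact_mod_cast this
        · simp [hj]
      · rw [hbsum]
        exact Finset.sum_congr rfl fun j hj => by simp [hj]
    · -- dependent case
      obtain ⟨g, hg0, j1, hj1⟩ := Fintype.not_linearIndependent_iff.mp hli
      set σ : ℝ := if 0 < g j1 then 1 else -1 with hσ
      set t : ι → ℝ := fun j => if h : j ∈ s then σ * g ⟨j, h⟩ else 0 with ht
      have htsum : ∑ j ∈ s, t j • rc (w j) = 0 := by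
        have : ∑ j ∈ s, t j • rc (w j) = σ • ∑ j : {x // x ∈ s}, g j • rc (w j.1) := by
          rw [Finset.smul_sum, ← Finset.sum_attach s fun j => t j • rc (w j)]
          refine Finset.sum_congr rfl fun j _ => ?_
          simp [ht, j.2, mul_smul]
        rw [this, hg0, smul_zero]
      have htj1 : 0 < t j1.1 := by
        have hne : g j1 ≠ 0 := hj1
        simp only [ht, j1.2, dif_pos]
        rcases lt_trichotomy (g j1) 0 with h | h | h
        · rw [hσ, if_neg (by linarith)]; nlinarith
        · exact absurd h hne
        · rw [hσ, if_pos h]; nlinarith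
      set sPos := s.filter (fun j => 0 < t j) with hsPos
      have hsPosne : sPos.Nonempty := ⟨j1.1, Finset.mem_filter.mpr ⟨j1.2, htj1⟩⟩
      set ε := (sPos.image fun j => c j / t j).min' (hsPosne.image _) with hε
      obtain ⟨j0, hj0Pos, hj0⟩ := Finset.mem_image.mp
        ((sPos.image fun j => c j / t j).min'_mem (hsPosne.image _))
      have hj0s : j0 ∈ s := (Finset.mem_filter.mp hj0Pos).1
      have htj0 : 0 < t j0 := (Finset.mem_filter.mp hj0Pos).2
      have hεle : ∀ j ∈ sPos, ε ≤ c j / t j := fun j hj =>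
        Finset.min'_le _ _ (Finset.mem_image_of_mem _ hj)
      have hε0 : 0 ≤ ε := by
        rw [hε, ← hj0]
        exact div_nonneg (hc j0 hj0s) htj0.le
      set c' : ι → ℝ := fun j => c j - ε * t j with hc'
      have hc'0 : ∀ j ∈ s, 0 ≤ c' j := by
        intro j hj
        by_cases hpos : 0 < t j
        · have := hεle j (Finset.mem_filter.mpr ⟨hj, hpos⟩)
          simp only [hc']
          rw [sub_nonneg]
          calc ε * t j ≤ (c j / t j) * t j := by
                exact mul_le_mul_of_nonneg_right (hεle j (Finset.mem_filter.mpr ⟨hj, hpos⟩)) hpos.le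
            _ = c j := div_mul_cancel₀ _ hpos.ne'
        · push_neg at hpos
          simp only [hc']
          have : ε * t j ≤ 0 := mul_nonpos_of_nonneg_of_nonpos hε0 hpos
          linarith [hc j hj]
      have hc'j0 : c' j0 = 0 := by
        simp only [hc']
        rw [hε, ← hj0, div_mul_cancel₀ _ htj0.ne', sub_self]
      have hsum' : rc b = ∑ j ∈ s.erase j0, c' j • rc (w j) := by
        have h1 : ∑ j ∈ s, c' j • rc (w j) = ∑ j ∈ s, c j • rc (w j)
            - ε • ∑ j ∈ s, t j • rc (w j) := by
          rw [Finset.smul_sum, ← Finset.sum_sub_distrib]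
          refine Finset.sum_congr rfl fun j _ => ?_
          simp only [hc', sub_smul, smul_smul]
        have h2 : ∑ j ∈ s, c' j • rc (w j) = rc b := by
          rw [h1, htsum, smul_zero, sub_zero, hsum]
        rw [← h2, ← Finset.add_sum_erase s _ hj0s, hc'j0, zero_smul, zero_add]
      obtain ⟨d, hd0, hdb⟩ := IH (s.erase j0) (Finset.erase_ssubset hj0s) c'
        (fun j hj => hc'0 j (Finset.mem_of_mem_erase hj)) hsum'
      refine ⟨fun j => if j = j0 then 0 else d j, fun j => ?_, ?_⟩
      · by_cases hj : j = j0 <;> simp [hj, hd0 j]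
      · rw [hdb,
          ← Finset.add_sum_erase s (fun j => (if j = j0 then (0:ℚ) else d j) • w j) hj0s]
        simp only [if_true, eq_self_iff_true, zero_smul, zero_add]
        exact Finset.sum_congr rfl fun j hj => by
          rw [if_neg (Finset.ne_of_mem_erase hj)]

end Rat
section Sep
variable {n q : ℕ}

/-- real vector of a column -/
def vR (v : Fin q → Fin n → ℕ) : Fin q → Fin n → ℝ := fun j i => (v j i : ℝ)

lemma clm_eq_sum (φ : (Fin n → ℝ) →L[ℝ] ℝ) (x : Fin n → ℝ) :
    φ x = ∑ i, x i * φ (Pi.single i 1) := by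
  conv_lhs => rw [pi_eq_sum_univ x, map_sum]
  refine Finset.sum_congr rfl fun i _ => ?_
  rw [map_smul, smul_eq_mul]
  congr 2
  funext j
  simp [Pi.single_apply, eq_comm]

lemma mem_C_of_blocking (v : Fin q → Fin n → ℕ) (hq : 0 < q) (z0 : Fin n → ℝ)
    (hz0 : ∀ i, 0 ≤ z0 i) (h : ∀ x ∈ QA v, 1 ≤ ∑ i, z0 i * x i) :
    ∃ l ∈ stdSimplex ℝ (Fin q), ∃ r : Fin n → ℝ,
      (∀ i, 0 ≤ r i) ∧ z0 = (∑ j, l j • vR v j) + r := by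
  classical
  set L : (Fin q → ℝ) → (Fin n → ℝ) := fun l => ∑ j, l j • vR v j with hL
  set Kc : Set (Fin n → ℝ) := L '' stdSimplex ℝ (Fin q) with hKc
  set Rp : Set (Fin n → ℝ) := {x | ∀ i, 0 ≤ x i} with hRp
  have hzero_mem : (0 : Fin n → ℝ) ∈ Rp := fun i => le_refl 0
  have hKcpt : IsCompact Kc := (isCompact_stdSimplex _ _).image
    (continuous_finset_sum _ fun j _ => (continuous_apply j).smul continuous_const)
  have hRcl : IsClosed Rp := by
    have : Rp = ⋂ i, {x : Fin n → ℝ | 0 ≤ x i} := by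
      ext x; simp [hRp, Set.mem_iInter]
    rw [this]
    exact isClosed_iInter fun i => isClosed_le continuous_const (continuous_apply i)
  have hKconv : Convex ℝ Kc := (convex_stdSimplex ℝ (Fin q)).is_linear_image
    ⟨fun x y => by simp [hL, add_smul, Finset.sum_add_distrib],
     fun c x => by simp [hL, mul_smul, Finset.smul_sum]⟩
  have hRconv : Convex ℝ Rp := by
    intro x hx y hy a b ha hb hab i
    have := hx i; have := hy i
    simp only [Pi.add_apply, Pi.smul_apply, smul_eq_mul]
    nlinarith
  have hCcl : IsClosed (Kc + Rp) := hRcl.add_left_of_isCompact hKcpt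
  have hCconv : Convex ℝ (Kc + Rp) := hKconv.add hRconv
  have hzC : z0 ∈ Kc + Rp := by
    by_contra h0
    obtain ⟨φ, u, hφz, hφC⟩ := geometric_hahn_banach_point_closed hCconv hCcl h0
    set y : Fin n → ℝ := fun i => φ (Pi.single i 1) with hy
    set j0 : Fin q := ⟨0, hq⟩
    have hv0K : vR v j0 ∈ Kc := by
      refine ⟨Pi.single j0 1, single_mem_stdSimplex ℝ j0, ?_⟩
      simp [hL, Pi.single_apply, ite_smul, Finset.sum_ite_eq']
    have hKlt : ∀ w ∈ Kc, ∀ r ∈ Rp, u < φ (w + r) := fun w hw r hr =>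
      hφC _ (Set.add_mem_add hw hr)
    have hvu : u < φ (vR v j0) := by
      have := hKlt _ hv0K 0 hzero_mem
      simpa using this
    have hynn : ∀ i, 0 ≤ y i := by
      intro i
      by_contra hyi
      push_neg at hyi
      set t0 : ℝ := (u - φ (vR v j0)) / y i with ht0
      have ht0pos : 0 < t0 := div_pos_iff.mpr (Or.inr ⟨by linarith, hyi⟩)
      set e : Fin n → ℝ := Pi.single i (1:ℝ) with he
      have hmem : t0 • e ∈ Rp := by
        intro i'
        simp only [Pi.smul_apply, smul_eq_mul]
        by_cases hii : i' = i <;> simp [he, Pi.single_apply, hii, ht0pos.le]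
      have hlt := hKlt _ hv0K _ hmem
      rw [map_add, map_smul, smul_eq_mul] at hlt
      have hye : φ e = y i := rfl
      rw [hye, ht0, div_mul_cancel₀ _ (ne_of_lt hyi)] at hlt
      linarith
    have hφz0 : 0 ≤ φ z0 := by
      rw [clm_eq_sum]
      exact Finset.sum_nonneg fun i _ => mul_nonneg (hz0 i) (hynn i)
    have hu : 0 < u := lt_of_le_of_lt hφz0 hφz
    set x : Fin n → ℝ := fun i => y i / u with hx
    have hxQA : x ∈ QA v := by
      constructor
      · exact fun i => div_nonneg (hynn i) hu.le
      · intro j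
        have hj : u < φ (vR v j) := by
          have hmemK : vR v j ∈ Kc := by
            refine ⟨Pi.single j 1, single_mem_stdSimplex ℝ j, ?_⟩
            simp [hL, Pi.single_apply, ite_smul, Finset.sum_ite_eq']
          have := hKlt _ hmemK 0 hzero_mem
          simpa using this
        have hsum : ∑ i, x i * (v j i : ℝ) = φ (vR v j) / u := by
          rw [clm_eq_sum, Finset.sum_div]
          refine Finset.sum_congr rfl fun i _ => ?_
          rw [hx]
          show y i / u * (v j i : ℝ) = vR v j i * y i / u
          rw [vR]
          ring
        rw [hsum]
        rw [le_div_iff₀ hu, one_mul]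
        exact hj.le
    have hcontr := h x hxQA
    have : ∑ i, z0 i * x i = φ z0 / u := by
      rw [clm_eq_sum, Finset.sum_div]
      refine Finset.sum_congr rfl fun i _ => ?_
      show z0 i * (y i / u) = z0 i * y i / u
      ring
    rw [this] at hcontr
    have : φ z0 / u < 1 := (div_lt_one hu).mpr hφz
    linarith
  obtain ⟨w, hw, r, hr, hzr⟩ := Set.mem_add.mp hzC
  obtain ⟨l, hl, hlw⟩ := hw
  exact ⟨l, hl, r, hr, by rw [← hzr, ← hlw]⟩

end Sep
section Glue

variable {n q : ℕ}

lemma mem_smul_BQ_iff (v : Fin q → Fin n → ℕ) (k : ℕ) (hk : 1 ≤ k) (a : Fin n → ℕ) :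
    (fun i => (a i : ℝ)) ∈ (k : ℝ) • BQ v ↔
      ∀ x ∈ QA v, (k : ℝ) ≤ ∑ i, (a i : ℝ) * x i := by
  have hkpos : (0:ℝ) < (k:ℝ) := by exact_mod_cast hk
  rw [Set.mem_smul_set_iff_inv_smul_mem₀ (ne_of_gt hkpos)]
  have happ : ∀ x : Fin n → ℝ,
      ∑ i, ((k:ℝ)⁻¹ • fun i => (a i : ℝ)) i * x i = (k:ℝ)⁻¹ * ∑ i, (a i : ℝ) * x i := by
    intro x
    rw [Finset.mul_sum]
    exact Finset.sum_congr rfl fun i _ => by simp [mul_assoc]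
  constructor
  · intro hmem x hx
    have h2 := hmem.2 x hx
    rw [happ] at h2
    have := mul_le_mul_of_nonneg_left h2 hkpos.le
    rwa [mul_one, ← mul_assoc, mul_inv_cancel₀ (ne_of_gt hkpos), one_mul] at this
  · intro h
    constructor
    · intro i
      simp only [Pi.smul_apply, smul_eq_mul]
      positivity
    · intro x hx
      rw [happ]
      have := mul_le_mul_of_nonneg_left (h x hx) (inv_nonneg.mpr hkpos.le)
      rwa [inv_mul_cancel₀ (ne_of_gt hkpos)] at this

lemma easy_dir (v : Fin q → Fin n → ℕ) (k : ℕ) (a : Fin n → ℕ)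
    (p : ℕ) (hp : 0 < p) (c : Fin q → ℕ) (hcsum : (∑ j, c j) = p * k)
    (hcle : ∀ i, (∑ j, c j * v j i) ≤ p * a i) :
    ∀ x ∈ QA v, (k : ℝ) ≤ ∑ i, (a i : ℝ) * x i := by
  intro x hx
  have hppos : (0:ℝ) < (p:ℝ) := by exact_mod_cast hp
  have h1 : ((p*k : ℕ) : ℝ) ≤ ∑ j, (c j : ℝ) * (∑ i, x i * (v j i : ℝ)) := by
    rw [← hcsum]
    push_cast
    refine Finset.sum_le_sum fun j _ => ?_
    exact le_mul_of_one_le_right (by positivity) (hx.2 j)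
  have h2 : ∑ j, (c j : ℝ) * (∑ i, x i * (v j i : ℝ))
      = ∑ i, (∑ j, (c j : ℝ) * (v j i : ℝ)) * x i := by
    simp_rw [Finset.mul_sum, Finset.sum_mul]
    rw [Finset.sum_comm]
    exact Finset.sum_congr rfl fun i _ => Finset.sum_congr rfl fun j _ => by ring
  have h3 : ∑ i, (∑ j, (c j : ℝ) * (v j i : ℝ)) * x i
      ≤ ∑ i, ((p : ℝ) * (a i : ℝ)) * x i := by
    refine Finset.sum_le_sum fun i _ => mul_le_mul_of_nonneg_right ?_ (hx.1 i)
    have := hcle i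
    exact_mod_cast this
  have h4 : ∑ i, ((p:ℝ) * (a i : ℝ)) * x i = (p:ℝ) * ∑ i, (a i : ℝ) * x i := by
    rw [Finset.mul_sum]
    exact Finset.sum_congr rfl fun i _ => by ring
  have : (p:ℝ) * (k:ℝ) ≤ (p:ℝ) * ∑ i, (a i : ℝ) * x i := by
    push_cast at h1
    linarith
  exact le_of_mul_le_mul_left this hppos

end Glue

section Hard
variable {n q : ℕ}

lemma hard_dir (v : Fin q → Fin n → ℕ) (k : ℕ) (hk : 1 ≤ k) (a : Fin n → ℕ)
    (h : ∀ x ∈ QA v, (k : ℝ) ≤ ∑ i, (a i : ℝ) * x i) :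
    ∃ p : ℕ, 0 < p ∧ ∃ c : Fin q → ℕ, (∑ j, c j) = p * k ∧
      ∀ i, (∑ j, c j * v j i) ≤ p * a i := by
  classical
  have hkpos : (0:ℝ) < (k:ℝ) := by exact_mod_cast hk
  rcases Nat.eq_zero_or_pos q with hq | hq
  · exfalso
    subst hq
    have h0 : (0 : Fin n → ℝ) ∈ QA v := ⟨fun i => le_refl 0, fun j => j.elim0⟩
    have := h 0 h0
    simp only [Pi.zero_apply, mul_zero, Finset.sum_const_zero] at this
    linarith
  · set z0 : Fin n → ℝ := fun i => (a i : ℝ) / k with hz0def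
    have hz0 : ∀ i, 0 ≤ z0 i := fun i => by positivity
    have hblock : ∀ x ∈ QA v, 1 ≤ ∑ i, z0 i * x i := by
      intro x hx
      have hax := h x hx
      have heq : ∑ i, z0 i * x i = (∑ i, (a i:ℝ) * x i) / k := by
        rw [Finset.sum_div]
        exact Finset.sum_congr rfl fun i _ => by rw [hz0def]; ring
      rw [heq, le_div_iff₀ hkpos, one_mul]
      exact hax
    obtain ⟨l, hl, r, hr, hzeq⟩ := mem_C_of_blocking v hq z0 hz0 hblock
    set w : (Fin q ⊕ Fin n) → Fin (n+1) → ℚ :=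
      Sum.elim (fun j => Fin.cons 1 (fun i => (v j i : ℚ)))
               (fun i => Fin.cons 0 (Pi.single i 1)) with hw
    set b : Fin (n+1) → ℚ := Fin.cons (k:ℚ) (fun i => (a i : ℚ)) with hb
    set c : (Fin q ⊕ Fin n) → ℝ := Sum.elim (fun j => (k:ℝ) * l j) (fun i => (k:ℝ) * r i)
      with hc
    have hcnn : ∀ j ∈ (Finset.univ : Finset (Fin q ⊕ Fin n)), 0 ≤ c j := by
      rintro (j | i) _
      · exact mul_nonneg hkpos.le (hl.1 j)
      · exact mul_nonneg hkpos.le (hr i)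
    have hzi : ∀ i, (a i : ℝ) = (k:ℝ) * ((∑ j, l j * (v j i:ℝ)) + r i) := by
      intro i
      have h5 := congrFun hzeq i
      have h6 : ((∑ j, l j • vR v j) + r) i = (∑ j, l j * (v j i:ℝ)) + r i := by
        simp [Finset.sum_apply, vR]
      rw [h6, hz0def] at h5
      rw [← h5]
      field_simp
    have hsum : rc b = ∑ j, c j • rc (w j) := by
      funext t
      rw [Finset.sum_apply]
      simp only [Pi.smul_apply, smul_eq_mul]
      rw [Fintype.sum_sum_type]
      refine Fin.cases ?_ (fun i => ?_) t
      · have h1 : rc b 0 = (k:ℝ) := by simp [rc, hb]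
        have h2 : ∀ j : Fin q, rc (w (Sum.inl j)) 0 = 1 := fun j => by simp [rc, hw]
        have h3 : ∀ i : Fin n, rc (w (Sum.inr i)) 0 = 0 := fun i => by simp [rc, hw]
        rw [h1]
        simp only [h2, h3, mul_one, mul_zero, Finset.sum_const_zero, add_zero,
          hc, Sum.elim_inl]
        rw [← Finset.mul_sum, hl.2, mul_one]
      · have h1 : rc b i.succ = (a i : ℝ) := by simp [rc, hb]
        have h2 : ∀ j : Fin q, rc (w (Sum.inl j)) i.succ = (v j i : ℝ) := fun j => by
          simp [rc, hw]
        have h3 : ∀ i' : Fin n,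
            rc (w (Sum.inr i')) i.succ = if i = i' then 1 else 0 := fun i' => by
          simp only [rc, hw, Sum.elim_inr, Fin.cons_succ, Pi.single_apply]
          split <;> simp
        rw [h1]
        simp only [h2, h3, hc, Sum.elim_inl, Sum.elim_inr, mul_ite, mul_one, mul_zero]
        rw [Finset.sum_ite_eq Finset.univ i (fun i' => (k:ℝ) * r i')]
        simp only [Finset.mem_univ, if_true]
        rw [hzi i, mul_add, Finset.mul_sum]
        congr 1
        exact Finset.sum_congr rfl fun j _ => by ring
    obtain ⟨d, hd0, hdb⟩ := coneRat w b Finset.univ c hcnn hsum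
    have hdcoord : ∀ t : Fin (n+1), b t = ∑ j, d j • w j t := by
      intro t
      have := congrFun hdb t
      rw [Finset.sum_apply] at this
      simpa using this
    have hcoord0 : (k:ℚ) = ∑ j, d (Sum.inl j) := by
      have := hdcoord 0
      rw [Fintype.sum_sum_type] at this
      simp only [Pi.smul_apply, smul_eq_mul, hw, Sum.elim_inl, Sum.elim_inr,
        Fin.cons_zero, mul_one, mul_zero, Finset.sum_const_zero, add_zero, hb] at this
      simpa using this
    have hcoordi : ∀ i, (a i:ℚ) = (∑ j, d (Sum.inl j) * (v j i:ℚ)) + d (Sum.inr i) := by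
      intro i
      have := hdcoord i.succ
      rw [Fintype.sum_sum_type] at this
      simp only [Pi.smul_apply, smul_eq_mul, hw, Sum.elim_inl, Sum.elim_inr,
        Fin.cons_succ, hb, Pi.single_apply, mul_ite, mul_one, mul_zero] at this
      rw [Finset.sum_ite_eq Finset.univ i (fun i' => d (Sum.inr i'))] at this
      simp only [Finset.mem_univ, if_true] at this
      simpa using this
    set p : ℕ := ∏ j, (d (Sum.inl j)).den with hp
    have hppos : 0 < p := Finset.prod_pos fun j _ => (d (Sum.inl j)).den_pos
    set c' : Fin q → ℕ :=
      fun j => (p / (d (Sum.inl j)).den) * (d (Sum.inl j)).num.toNat with hc'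
    have hkey : ∀ j, ((c' j : ℚ)) = (p:ℚ) * d (Sum.inl j) := by
      intro j
      set e : ℚ := d (Sum.inl j) with he
      have hdvd : e.den ∣ p := Finset.dvd_prod_of_mem _ (Finset.mem_univ j)
      have hnn : 0 ≤ e := hd0 _
      have hnum : ((e.num.toNat : ℕ) : ℚ) = (e.num : ℚ) := by
        have h0 := Int.toNat_of_nonneg (Rat.num_nonneg.mpr hnn)
        exact_mod_cast congrArg (fun z : ℤ => (z : ℚ)) h0
      have hnumden : (e.num : ℚ) = e * (e.den:ℚ) := by
        have h6 := Rat.num_div_den e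
        have hden : ((e.den : ℕ):ℚ) ≠ 0 := by exact_mod_cast e.den_ne_zero
        rw [div_eq_iff hden] at h6
        exact h6
      have : (c' j : ℚ) = ((p / e.den : ℕ):ℚ) * ((e.num.toNat : ℕ) : ℚ) := by
        rw [hc']
        push_cast
        ring
      rw [this, hnum, hnumden]
      have h7 : ((p / e.den : ℕ):ℚ) * (e * (e.den:ℚ))
          = (((p / e.den) * e.den : ℕ):ℚ) * e := by
        push_cast
        ring
      rw [h7, Nat.div_mul_cancel hdvd]
    refine ⟨p, hppos, c', ?_, fun i => ?_⟩
    · have : ((∑ j, c' j : ℕ) : ℚ) = ((p * k : ℕ) : ℚ) := by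
        push_cast [hkey]
        rw [← Finset.mul_sum, ← hcoord0]
      exact_mod_cast this
    · have : ((∑ j, c' j * v j i : ℕ) : ℚ) ≤ (p:ℚ) * (a i : ℚ) := by
        push_cast [hkey]
        have h8 : ∑ j, (p:ℚ) * d (Sum.inl j) * (v j i:ℚ)
            = (p:ℚ) * ∑ j, d (Sum.inl j) * (v j i:ℚ) := by
          rw [Finset.mul_sum]
          exact Finset.sum_congr rfl fun j _ => by ring
        rw [h8]
        have h9 : (∑ j, d (Sum.inl j) * (v j i:ℚ)) ≤ (a i : ℚ) := by
          rw [hcoordi i]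
          have := hd0 (Sum.inr i)
          linarith
        have hp0 : (0:ℚ) ≤ (p:ℚ) := by positivity
        exact mul_le_mul_of_nonneg_left h9 hp0
      exact_mod_cast this

lemma key_iff (K : Type*) [Field K] (v : Fin q → Fin n → ℕ) (k : ℕ) (hk : 1 ≤ k)
    (a : Fin n → ℕ) :
    (∃ p : ℕ, 0 < p ∧
        mono K a ^ p ∈ (Ideal.span {f | ∃ j, f = mono K (v j)}) ^ (p * k)) ↔
      (fun i => (a i : ℝ)) ∈ (k : ℝ) • BQ v := by
  rw [mem_smul_BQ_iff v k hk a]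
  constructor
  · rintro ⟨p, hp, hmem⟩
    rw [mono_pow, mono_mem_pow_iff] at hmem
    obtain ⟨c, hcsum, hcle⟩ := hmem
    exact easy_dir v k a p hp c hcsum hcle
  · intro h
    obtain ⟨p, hp, c, hcsum, hcle⟩ := hard_dir v k hk a h
    refine ⟨p, hp, ?_⟩
    rw [mono_pow, mono_mem_pow_iff]
    exact ⟨c, hcsum, hcle⟩

end Hard


/-- For the monomial ideal `I = (x^{v_1},…,x^{v_q})` and every
`k ≥ 1`, the integral closure of `I^k` equals the ideal generated by the
monomials `x^a` with `a` an integer vector lying in `k·B(Q)`. -/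
theorem integralClosure_pow_eq_span_lattice_points_of_dilated_blocking_polyhedron
    (K : Type*) [Field K] (n q : ℕ) (v : Fin q → Fin n → ℕ)
    (I : Ideal (MvPolynomial (Fin n) K))
    (hI : I = Ideal.span {f | ∃ j, f = mono K (v j)})
    (k : ℕ) (hk : 1 ≤ k) :
    Ideal.span {f | ∃ a : Fin n → ℕ, f = mono K a ∧
        ∃ p : ℕ, 0 < p ∧ mono K a ^ p ∈ I ^ (p * k)}
      = Ideal.span {f | ∃ a : Fin n → ℕ, f = mono K a ∧
          (fun i => (a i : ℝ)) ∈ (k : ℝ) • BQ v} := by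
  subst hI
  refine congrArg Ideal.span ?_
  ext f
  simp only [Set.mem_setOf_eq]
  constructor
  · rintro ⟨a, rfl, hcond⟩
    exact ⟨a, rfl, (key_iff K v k hk a).mp hcond⟩
  · rintro ⟨a, rfl, hcond⟩
    exact ⟨a, rfl, (key_iff K v k hk a).mpr hcond⟩
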